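/- Let p be an odd prime, let K = ℚ(ζ_p) be the p-th cyclotomic field with ring of integers O_K = ℤ[ζ_p], let ζ be a primitive p-th root of unity in O_K, and let σ be the ℚ-algebra automorphism of K with σ(ζ) = ζ^{-1} (complex conjugation). Then for every unit u of O_K there exist a natural number k and a unit u₀ of O_K fixed by σ such that u = ζ^k · u₀. -/

import Mathlib

open NumberField

set_option synthInstance.maxHeartbeats 1000000 in
set_option maxHeartbeats 1000000 in
/-- Kummer's lemma on units: let `p` be an odd prime, `K = ℚ(ζ_p)` the `p`-th cyclotomic
field, `ζ` a primitive `p`-th root of unity in the ring of integers `𝓞 K`, and `σ` the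
`ℚ`-algebra automorphism of `K` with `σ ζ = ζ⁻¹` (complex conjugation). Then every unit
`u` of `𝓞 K` can be written `u = ζ ^ k * u₀` with `u₀` a unit fixed by `σ`. -/
theorem kummer_units_lemma (p : ℕ+) (hp : (p : ℕ).Prime) (hpodd : Odd (p : ℕ))
    (K : Type*) [Field K] [NumberField K] [IsCyclotomicExtension {(p : ℕ)} ℚ K]
    (ζ : 𝓞 K) (hζ : IsPrimitiveRoot ζ (p : ℕ))
    (σ : K ≃ₐ[ℚ] K)
    (hσ : σ (algebraMap (𝓞 K) K ζ) = (algebraMap (𝓞 K) K ζ)⁻¹)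
    (u : (𝓞 K)ˣ) :
    ∃ (k : ℕ) (u₀ : (𝓞 K)ˣ),
      σ (algebraMap (𝓞 K) K (u₀ : 𝓞 K)) = algebraMap (𝓞 K) K (u₀ : 𝓞 K) ∧
      (u : 𝓞 K) = ζ ^ k * (u₀ : 𝓞 K) := by
  haveI : Fact (p : ℕ).Prime := ⟨hp⟩
  have hp2 : p ≠ 2 := by
    rintro rfl
    simp [Nat.odd_iff] at hpodd
  have hppos : 0 < (p : ℕ) := p.2
  have hinj : Function.Injective (algebraMap (𝓞 K) K) := IsFractionRing.injective _ _
  set ζK : K := algebraMap (𝓞 K) K ζ with hζKdef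
  have hζK : IsPrimitiveRoot ζK (p : ℕ) := hζ.map_of_injective hinj
  have hζKp : ζK ^ (p : ℕ) = 1 := hζK.pow_eq_one
  have hζKne : ζK ≠ 0 := by
    intro h
    rw [h] at hζKp
    simp [zero_pow hppos.ne'] at hζKp
  -- the restricted automorphism
  set σ' : (𝓞 K) →+* (𝓞 K) := RingOfIntegers.mapRingHom σ with hσ'def
  have hσ'coe : ∀ x : 𝓞 K, algebraMap (𝓞 K) K (σ' x) = σ (algebraMap (𝓞 K) K x) := fun x => rfl
  have hadj : Algebra.adjoin ℤ ({ζ} : Set (𝓞 K)) = ⊤ := by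
    have := hζK.integralPowerBasis.adjoin_gen_eq_top
    rwa [hζK.integralPowerBasis_gen, show hζK.toInteger = ζ from rfl] at this
  -- σ' ζ = ζ ^ (p - 1)
  have hζinv : ζK⁻¹ = ζK ^ ((p : ℕ) - 1) := by
    apply inv_eq_of_mul_eq_one_right
    rw [← pow_succ', Nat.sub_add_cancel hppos, hζKp]
  have hσζ : σ' ζ = ζ ^ ((p : ℕ) - 1) := by
    apply hinj
    rw [hσ'coe, hσ, map_pow, hζinv]
  -- the unit uσ = σ' u
  set uσ : (𝓞 K)ˣ := Units.map (σ' : (𝓞 K) →* (𝓞 K)) u with huσdef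
  have huσcoe : (uσ : 𝓞 K) = σ' (u : 𝓞 K) := rfl
  -- λ = ζ - 1 divides σ' u - u
  have hlam : (ζ - 1) ∣ σ' (u : 𝓞 K) - (u : 𝓞 K) := by
    set q : (𝓞 K) →+* (𝓞 K) ⧸ Ideal.span {ζ - 1} := Ideal.Quotient.mk _ with hqdef
    have hqζ : q ζ = 1 := by
      have : q (ζ - 1) = 0 := Ideal.Quotient.eq_zero_iff_mem.2
        (Ideal.mem_span_singleton_self _)
      rw [map_sub, map_one, sub_eq_zero] at this
      exact this
    have hext : (q.comp σ').toIntAlgHom = q.toIntAlgHom := by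
      apply AlgHom.ext_of_adjoin_eq_top hadj
      intro x hx
      rw [Set.mem_singleton_iff] at hx
      rw [hx]
      show q (σ' ζ) = q ζ
      rw [hσζ, map_pow, hqζ, one_pow]
    have : q (σ' (u : 𝓞 K)) = q (u : 𝓞 K) := by
      have := congrArg (fun f => f (u : 𝓞 K)) (congrArg AlgHom.toRingHom hext)
      simpa using this
    rw [← Ideal.mem_span_singleton]
    rw [← sub_eq_zero, ← map_sub] at this
    exact Ideal.Quotient.eq_zero_iff_mem.1 (by rw [map_sub]; rw [map_sub] at this; exact this)
  -- the root of unity η = u / σ' u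
  set η : (𝓞 K)ˣ := u * uσ⁻¹ with hηdef
  set ηK : K := algebraMap (𝓞 K) K (η : 𝓞 K) with hηKdef
  set uK : K := algebraMap (𝓞 K) K (u : 𝓞 K) with huKdef
  have huKne : uK ≠ 0 := by
    simp only [huKdef, ne_eq, map_eq_zero_iff _ hinj]
    exact Units.ne_zero u
  have hησ : ηK * σ uK = uK := by
    have : (η : 𝓞 K) * (uσ : 𝓞 K) = (u : 𝓞 K) := by
      rw [hηdef]
      push_cast
      rw [mul_assoc, ← Units.val_mul, inv_mul_cancel, Units.val_one, mul_one]
    have := congrArg (algebraMap (𝓞 K) K) this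
    rwa [map_mul, huσcoe, hσ'coe] at this
  -- all archimedean absolute values of ηK are 1
  have hnorm : ∀ φ : K →+* ℂ, ‖φ ηK‖ = 1 := by
    intro φ
    have hconj : ∀ x : K, φ (σ x) = (starRingEnd ℂ) (φ x) := by
      have h1 : (φ.comp (σ : K →+* K)).toRatAlgHom =
          (((starRingEnd ℂ) : ℂ →+* ℂ).comp φ).toRatAlgHom := by
        apply AlgHom.ext_of_adjoin_eq_top (IsCyclotomicExtension.adjoin_primitive_root_eq_top hζK)
        intro x hx
        rw [Set.mem_singleton_iff] at hx
        rw [hx]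
        show φ (σ ζK) = (starRingEnd ℂ) (φ ζK)
        have habs : ‖φ ζK‖ = 1 :=
          Complex.norm_eq_one_of_pow_eq_one (by rw [← map_pow, hζKp, map_one]) hppos.ne'
        rw [hσ, map_inv₀, Complex.inv_eq_conj habs]
      intro x
      have := congrArg (fun f => f x) (congrArg AlgHom.toRingHom h1)
      simpa using this
    have huKn : ‖φ uK‖ ≠ 0 := by
      simp [norm_ne_zero_iff, map_eq_zero_iff φ φ.injective, huKne]
    have h2 : ‖φ ηK‖ * ‖φ uK‖ = ‖φ uK‖ := by
      conv_lhs => rw [← RCLike.norm_conj (φ uK), ← hconj uK]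
      rw [← norm_mul, ← map_mul, hησ]
    exact mul_right_cancel₀ huKn (by rw [h2, one_mul])
  -- η times uσ equals u, in 𝓞 K
  have hηuσ : (η : 𝓞 K) * (uσ : 𝓞 K) = (u : 𝓞 K) := by
    rw [hηdef]
    push_cast
    rw [mul_assoc, ← Units.val_mul, inv_mul_cancel, Units.val_one, mul_one]
  -- η is a root of unity
  have hηint : IsIntegral ℤ ηK := RingOfIntegers.isIntegral_coe (η : 𝓞 K)
  obtain ⟨n, hn, hpow⟩ := NumberField.Embeddings.pow_eq_one_of_norm_eq_one K ℂ hηint hnorm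
  have hfin : IsOfFinOrder ηK := isOfFinOrder_iff_pow_eq_one.2 ⟨n, hn, hpow⟩
  obtain ⟨r, hrlt, hcase⟩ := hζK.exists_pow_or_neg_mul_pow_of_isOfFinOrder hpodd hfin
  -- rule out the negative case
  have hηζ : ηK = ζK ^ r := by
    rcases hcase with h | h
    · exact h
    · exfalso
      have hηO : (η : 𝓞 K) = -ζ ^ r := by
        apply hinj
        rw [← hηKdef, h, map_neg, map_pow, ← hζKdef]
      have hd1 : (ζ - 1) ∣ (η : 𝓞 K) - 1 := by
        rw [← Units.dvd_mul_right (u := uσ), sub_mul, one_mul, hηuσ, huσcoe]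
        have := hlam.neg_right
        rwa [neg_sub] at this
      have hd2 : (ζ - 1) ∣ ζ ^ r - 1 := by
        simpa using sub_dvd_pow_sub_pow ζ 1 r
      have hd3 : (ζ - 1) ∣ (2 : 𝓞 K) := by
        have := dvd_sub hd2 hd1
        rw [hηO] at this
        have h4 : ζ ^ r - 1 - (-ζ ^ r - 1) = 2 * ζ ^ r := by ring
        rw [h4] at this
        exact (hζ.isUnit hppos.ne').pow r |>.dvd_mul_right.mp this
      -- contradiction with `toInteger_sub_one_not_dvd_two`
      haveI hcyc1 : IsCyclotomicExtension {(p : ℕ) ^ (0 + 1)} ℚ K := by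
        simpa using (inferInstance : IsCyclotomicExtension {(p : ℕ)} ℚ K)
      have hζK1 : IsPrimitiveRoot ζK ((p : ℕ) ^ (0 + 1)) := by simp only [zero_add, pow_one]; exact hζK
      have hnd := hζK1.toInteger_sub_one_not_dvd_two (fun h => hp2 (PNat.coe_injective h))
      exact hnd (by rw [show hζK1.toInteger = ζ from rfl]; exact hd3)
  -- now η = ζ ^ r in 𝓞 K
  have hu : (u : 𝓞 K) = ζ ^ r * (uσ : 𝓞 K) := by
    have hηO : (η : 𝓞 K) = ζ ^ r := by
      apply hinj
      rw [← hηKdef, hηζ, map_pow, ← hζKdef]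
    rw [← hηuσ, hηO]
  -- choose k with 2k ≡ r mod p
  set k : ℕ := r * (((p : ℕ) + 1) / 2) with hkdef
  have h2dvd : 2 ∣ (p : ℕ) + 1 := by
    obtain ⟨m, hm⟩ := hpodd
    exact ⟨m + 1, by omega⟩
  have hmod : 2 * k ≡ r [MOD (p : ℕ)] := by
    have h1 : 2 * k = r * ((p : ℕ) + 1) := by
      rw [hkdef, ← mul_assoc, mul_comm 2 r, mul_assoc, Nat.mul_div_cancel' h2dvd]
    rw [h1]
    calc r * ((p : ℕ) + 1) ≡ r * 1 [MOD (p : ℕ)] :=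
          Nat.ModEq.mul_left r (by simpa using (Nat.modEq_iff_dvd' (by omega)).2 dvd_rfl)
      _ = r := mul_one r
  have hpow2 : ζK ^ (2 * k) = ζK ^ r := by
    rw [pow_eq_pow_mod (2 * k) hζKp, pow_eq_pow_mod r hζKp,
      show 2 * k % (p : ℕ) = r % (p : ℕ) from hmod]
  -- the unit ζ
  set zu : (𝓞 K)ˣ := (hζ.isUnit hppos.ne').unit with hzudef
  have hzucoe : (zu : 𝓞 K) = ζ := IsUnit.unit_spec _
  refine ⟨k, zu⁻¹ ^ k * u, ?_, ?_⟩
  · -- σ fixes u₀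
    set u₀ : (𝓞 K)ˣ := zu⁻¹ ^ k * u with hu₀def
    set u₀K : K := algebraMap (𝓞 K) K (u₀ : 𝓞 K) with hu₀Kdef
    have hC : uK = ζK ^ k * u₀K := by
      have : (zu ^ k * u₀ : (𝓞 K)ˣ) = u := by
        rw [hu₀def, ← mul_assoc, ← mul_pow, mul_inv_cancel, one_pow, one_mul]
      have := congrArg (fun w : (𝓞 K)ˣ => algebraMap (𝓞 K) K (w : 𝓞 K)) this
      simp only [Units.val_mul, Units.val_pow_eq_pow_val, map_mul, map_pow, hzucoe] at this
      exact this.symm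
    have hB : uK = ζK ^ r * σ uK := by
      have := congrArg (algebraMap (𝓞 K) K) hu
      rw [map_mul, map_pow, ← hζKdef, ← huKdef, huσcoe, hσ'coe, ← huKdef] at this
      exact this
    have hA : σ u₀K = ζK ^ k * σ uK := by
      have := congrArg σ hC
      rw [map_mul, map_pow, hσ] at this
      have h5 : ζK ^ k * σ uK = ζK ^ k * ((ζK⁻¹) ^ k * σ u₀K) := by rw [← this]
      rw [h5, ← mul_assoc, ← mul_pow, mul_inv_cancel₀ hζKne, one_pow, one_mul]
    show σ u₀K = u₀K
    apply mul_left_cancel₀ (pow_ne_zero (k + r) hζKne)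
    calc ζK ^ (k + r) * σ u₀K
        = ζK ^ (2 * k) * (ζK ^ r * σ uK) := by rw [hA]; ring
      _ = ζK ^ r * (ζK ^ r * σ uK) := by rw [hpow2]
      _ = ζK ^ r * uK := by rw [← hB]
      _ = ζK ^ (k + r) * u₀K := by rw [hC]; ring
  · -- u = ζ ^ k * u₀
    have : (zu ^ k * (zu⁻¹ ^ k * u) : (𝓞 K)ˣ) = u := by
      rw [← mul_assoc, ← mul_pow, mul_inv_cancel, one_pow, one_mul]
    have := congrArg (fun w : (𝓞 K)ˣ => (w : 𝓞 K)) this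
    simp only [Units.val_mul, Units.val_pow_eq_pow_val, hzucoe] at this
    rw [← this, Units.val_mul, Units.val_pow_eq_pow_val]
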